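/- Let A have at least two elements a ≠ b. There exists an ω-operation ψ : A^ω → A lying in the uniform closure complement: ψ is not in the U-closure of (O_A)^⊤, where U is the uniform ideal; concretely, ψ(r) = a if no coordinate of r equals b, and ψ(r) = b otherwise, is not in the U-closure of {f^⊤ : f finitary}. Hence the U-closure of (O_A)^⊤ is a proper subset of O_A^{(ω)}. -/

import Mathlib

private lemma mod_lem (n m k : ℕ) (h : n ≤ m) :
    (2 ^ n + k * 2 ^ (m + 1)) % 2 ^ (n + 1) = 2 ^ n := by
  have h1 : k * 2 ^ (m + 1) = (k * 2 ^ (m - n)) * 2 ^ (n + 1) := by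
    rw [mul_assoc, ← pow_add]; congr 2; omega
  have h2 : (2:ℕ) ^ n < 2 ^ (n + 1) := by
    have := Nat.one_le_two_pow (n := n)
    rw [pow_succ]; omega
  rw [h1, Nat.add_mul_mod_self_right, Nat.mod_eq_of_lt h2]

theorem stmt_10 {A : Type*} (a b : A) (hab : a ≠ b) (ψ : (ℕ → A) → A)
    (hψ : ∀ r : ℕ → A,
      ((∀ i, r i ≠ b) → ψ r = a) ∧ ((∃ i, r i = b) → ψ r = b)) :
    ¬ (∀ d : Set (ℕ → A),
        (d.Countable ∧ ∀ s : ℕ → A, {r ∈ d | {i : ℕ | r i ≠ s i}.Finite}.Finite) →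
        ∃ (n : ℕ) (f : (Fin n → A) → A),
          ∀ r ∈ d, ψ r = f (fun i : Fin n => r i.val)) := by
  intro H
  set u : ℕ → ℕ → A := fun n i => if i % 2 ^ (n + 1) = 2 ^ n then b else a with hu
  set d : Set (ℕ → A) := insert (fun _ => a) (Set.range u) with hd
  -- basic facts
  have hpow : ∀ n : ℕ, (2:ℕ) ^ n < 2 ^ (n + 1) := by
    intro n
    have := Nat.one_le_two_pow (n := n)
    rw [pow_succ]; omega
  have hub : ∀ n, u n (2 ^ n) = b := by
    intro n
    simp only [hu]
    rw [Nat.mod_eq_of_lt (hpow n), if_pos rfl]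
  have hval : ∀ n m k, n ≤ m → u n (2 ^ n + k * 2 ^ (m + 1)) = b := by
    intro n m k h
    simp only [hu]
    rw [mod_lem n m k h, if_pos rfl]
  -- any two distinct elements of d differ at infinitely many coordinates
  have hdiff : ∀ r ∈ d, ∀ r' ∈ d, r ≠ r' → {i : ℕ | r i ≠ r' i}.Infinite := by
    have key : ∀ n m : ℕ, n < m → {i : ℕ | u n i ≠ u m i}.Infinite := by
      intro n m hnm
      apply Set.infinite_of_injective_forall_mem
        (f := fun k : ℕ => 2 ^ n + k * 2 ^ (m + 1))
      · intro k1 k2 hk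
        have h2 : (0:ℕ) < 2 ^ (m + 1) := Nat.pow_pos (by norm_num)
        exact Nat.eq_of_mul_eq_mul_right h2 (Nat.add_left_cancel hk)
      · intro k
        have h1 : u n (2 ^ n + k * 2 ^ (m + 1)) = b := hval n m k hnm.le
        have h2 : u m (2 ^ n + k * 2 ^ (m + 1)) = a := by
          simp only [hu]
          have hlt : (2:ℕ) ^ n < 2 ^ (m + 1) :=
            Nat.pow_lt_pow_right one_lt_two (by omega)
          rw [Nat.add_mul_mod_self_right, Nat.mod_eq_of_lt hlt]
          have : (2:ℕ) ^ n ≠ 2 ^ m := by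
            have := Nat.pow_lt_pow_right (one_lt_two) hnm
            omega
          rw [if_neg this]
        simp only [Set.mem_setOf_eq, h1, h2]
        exact fun h => hab h.symm
    have keya : ∀ n : ℕ, {i : ℕ | u n i ≠ (fun _ => a) i}.Infinite := by
      intro n
      apply Set.infinite_of_injective_forall_mem
        (f := fun k : ℕ => 2 ^ n + k * 2 ^ (n + 1))
      · intro k1 k2 hk
        have h2 : (0:ℕ) < 2 ^ (n + 1) := Nat.pow_pos (by norm_num)
        exact Nat.eq_of_mul_eq_mul_right h2 (Nat.add_left_cancel hk)
      · intro k
        have h1 : u n (2 ^ n + k * 2 ^ (n + 1)) = b := hval n n k le_rfl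
        simp only [Set.mem_setOf_eq, h1]
        exact fun h => hab h.symm
    intro r hr r' hr' hne
    rcases hr with hr | ⟨n, rfl⟩
    · rcases hr' with hr' | ⟨m, rfl⟩
      · exact absurd (hr.trans hr'.symm) hne
      · subst hr
        have := keya m
        have : {i : ℕ | (fun _ => a) i ≠ u m i}.Infinite := by
          convert this using 1
          ext i; simp [ne_comm]
        exact this
    · rcases hr' with hr' | ⟨m, rfl⟩
      · subst hr'; exact keya n
      · rcases lt_trichotomy n m with h | h | h
        · exact key n m h
        · exact absurd (by rw [h]) hne
        · have := key m n h
          have : {i : ℕ | u n i ≠ u m i}.Infinite := by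
            convert this using 1
            ext i; simp [ne_comm]
          exact this
  -- d is uniform
  have hdU : d.Countable ∧ ∀ s : ℕ → A, {r ∈ d | {i : ℕ | r i ≠ s i}.Finite}.Finite := by
    constructor
    · exact (Set.countable_range u).insert _
    · intro s
      apply Set.Subsingleton.finite
      intro r hr r' hr'
      by_contra hne
      have hinf := hdiff r hr.1 r' hr'.1 hne
      have hsub : {i : ℕ | r i ≠ r' i} ⊆ {i : ℕ | r i ≠ s i} ∪ {i : ℕ | r' i ≠ s i} := by
        intro i hi
        by_contra hcon
        simp only [Set.mem_union, Set.mem_setOf_eq, not_or, not_not] at hcon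
        exact hi (hcon.1.trans hcon.2.symm)
      exact hinf (Set.Finite.subset (hr.2.union hr'.2) hsub)
  obtain ⟨n, f, hf⟩ := H d hdU
  -- evaluate on constant a
  have hca : (fun _ : ℕ => a) ∈ d := Set.mem_insert _ _
  have hun : u n ∈ d := Set.mem_insert_of_mem _ ⟨n, rfl⟩
  have h1 : ψ (fun _ => a) = a := (hψ _).1 (fun _ => hab)
  have h2 : ψ (u n) = b := (hψ _).2 ⟨2 ^ n, hub n⟩
  have h3 : (fun i : Fin n => u n i.val) = (fun _ : Fin n => a) := by
    funext i
    simp only [hu]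
    have hi : (i : ℕ) < 2 ^ n := lt_of_lt_of_le i.isLt (Nat.le_of_lt (Nat.lt_two_pow_self (n := n)))
    have hi' : (i : ℕ) % 2 ^ (n + 1) = (i : ℕ) :=
      Nat.mod_eq_of_lt (lt_trans hi (hpow n))
    rw [hi', if_neg (by omega)]
  have e1 := hf _ hca
  have e2 := hf _ hun
  rw [h1] at e1
  rw [h2, h3] at e2
  exact hab (e1.trans e2.symm)
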